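/- Suppose f: {0,1}^n → {0,1} satisfies δ·E[f(N_α)] - ε' ≥ E[f(U)] with ε' > 0 and 0 < δ. Then q := E[f(N_α)] ≥ ε'/δ, and choosing ℓ = ⌈1/q⌉ ≤ ⌈δ/ε'⌉, the random function F(z) = OR_{i∈[ℓ]} f(ρ_i(z)), where the ρ_i are independent uniformly random permutations of the n coordinates, satisfies: Pr over F and z ~ N_α that F(z) = 0 is at most e^{-1}, and Pr over F and z ~ U that F(z) = 1 is at most 2δ. Consequently, if δ < 1/4, some fixed function in the support of F distinguishes N_α from U with advantage at least 1 - e^{-1} - 2δ > 0. -/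

import Mathlib

open Finset

noncomputable section

/-- Real value of a boolean. -/
def bval (b : Bool) : ℝ := if b then 1 else 0

/-- Expectation of a boolean test under a (finitely supported) distribution on `{0,1}^n`. -/
def Ex {n : ℕ} (μ : (Fin n → Bool) → ℝ) (f : (Fin n → Bool) → Bool) : ℝ :=
  ∑ z : Fin n → Bool, μ z * bval (f z)

/-- `μ` is a probability distribution on `{0,1}^n`. -/
def IsDist {n : ℕ} (μ : (Fin n → Bool) → ℝ) : Prop :=
  (∀ z, 0 ≤ μ z) ∧ ∑ z : Fin n → Bool, μ z = 1

/-- The uniform distribution on `{0,1}^n`. -/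
def uni (n : ℕ) : (Fin n → Bool) → ℝ := fun _ => 1 / 2 ^ n

/-- The biased-coin product distribution `N_α`: each bit is 1 with probability `1/2 - α`. -/
def coin (n : ℕ) (α : ℝ) : (Fin n → Bool) → ℝ :=
  fun z => ∏ i : Fin n, if z i then (1/2 - α : ℝ) else (1/2 + α)

/-- Hamming weight. -/
def wt {m : ℕ} (z : Fin m → Bool) : ℕ := (Finset.univ.filter fun i => z i = true).card

/-- Binary entropy function (base 2). -/
def hbin (x : ℝ) : ℝ := -(x * Real.logb 2 x + (1 - x) * Real.logb 2 (1 - x))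

/-- `IsDT k f`: `f` is computed by a decision tree of depth at most `k`. -/
inductive IsDT {n : ℕ} : ℕ → ((Fin n → Bool) → Bool) → Prop
  | const (k : ℕ) (b : Bool) : IsDT k (fun _ => b)
  | node {k : ℕ} {g h : (Fin n → Bool) → Bool} (i : Fin n)
      (hg : IsDT k g) (hh : IsDT k h)
      (hgi : ∀ z b, g (Function.update z i b) = g z)
      (hhi : ∀ z b, h (Function.update z i b) = h z) :
      IsDT (k + 1) (fun z => if z i then h z else g z)

/-- The random-restriction distribution `R_p`: each coordinate is unset (`none`)
with probability `p`, else a uniform bit. -/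
def Rp (n : ℕ) (p : ℝ) : (Fin n → Option Bool) → ℝ :=
  fun ρ => ∏ i : Fin n, Option.elim (ρ i) p (fun _ => (1 - p) / 2)

/-- Composition of a restriction with an input: unset coordinates are filled from `z`. -/
def compR {n : ℕ} (ρ : Fin n → Option Bool) (z : Fin n → Bool) : Fin n → Bool :=
  fun i => (ρ i).getD (z i)

/-- The hamSlice of `{0,1}^m` of Hamming weight exactly `w`. -/
def hamSlice (m w : ℕ) : Finset (Fin m → Bool) :=
  Finset.univ.filter fun z => wt z = w

lemma sum_prod_fn {ι κ : Type*} [Fintype ι] [DecidableEq ι] [Fintype κ] [DecidableEq κ]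
    (g : ι → κ → ℝ) : ∑ x : ι → κ, ∏ i, g i (x i) = ∏ i, ∑ j, g i j := by
  rw [← Fintype.piFinset_univ, ← Finset.prod_univ_sum]

lemma sum_prod_eq_pow {X : Type*} [Fintype X] [DecidableEq X] (h : X → ℝ) (ℓ : ℕ) :
    ∑ x : Fin ℓ → X, ∏ i, h (x i) = (∑ z, h z) ^ ℓ := by
  rw [sum_prod_fn]; simp

lemma forall_sum {X : Type*} [Fintype X] [DecidableEq X] (μ : X → ℝ) (f : X → Bool) (ℓ : ℕ) :
    ∑ x : Fin ℓ → X, (∏ i, μ (x i)) * (if ∀ i, f (x i) = false then (1:ℝ) else 0)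
      = (∑ z, μ z * (if f z = false then 1 else 0)) ^ ℓ := by
  rw [← sum_prod_eq_pow]
  refine Finset.sum_congr rfl fun x _ => ?_
  have h : (if ∀ i, f (x i) = false then (1:ℝ) else 0)
      = ∏ i, (if f (x i) = false then (1:ℝ) else 0) := by
    rw [Finset.prod_boole]; simp
  rw [h, ← Finset.prod_mul_distrib]

lemma exists_sum {X : Type*} [Fintype X] [DecidableEq X] (μ : X → ℝ) (f : X → Bool) (ℓ : ℕ) :
    ∑ x : Fin ℓ → X, (∏ i, μ (x i)) * (if ∃ i, f (x i) = true then (1:ℝ) else 0)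
      = (∑ z, μ z) ^ ℓ - (∑ z, μ z * (if f z = false then 1 else 0)) ^ ℓ := by
  rw [← sum_prod_eq_pow, ← forall_sum, ← Finset.sum_sub_distrib]
  refine Finset.sum_congr rfl fun x _ => ?_
  have h : (if ∃ i, f (x i) = true then (1:ℝ) else 0)
      = 1 - (if ∀ i, f (x i) = false then (1:ℝ) else 0) := by
    by_cases hx : ∃ i, f (x i) = true
    · have : ¬ ∀ i, f (x i) = false := by
        obtain ⟨i, hi⟩ := hx; intro h'; rw [h' i] at hi; simp at hi
      simp [hx, this]
    · have : ∀ i, f (x i) = false := by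
        intro i; cases hfi : f (x i); · rfl
        · exact absurd ⟨i, hfi⟩ hx
      simp [hx, this]
  rw [h]; ring


/-- error reduction. If `f` refutes `(ε', δ)`-pseudodensity of `N_α`,
then `q = E[f(N_α)] ≥ ε'/δ`, and with `ℓ = ⌈1/q⌉` i.i.d. copies, the OR of `f` on the
copies rejects `ℓ` i.i.d. samples of `N_α` with probability at most `e⁻¹`, accepts
`ℓ` i.i.d. uniform samples with probability at most `2δ`, and hence (for `δ < 1/4`)
distinguishes the product distributions with advantage at least `1 - e⁻¹ - 2δ`. -/
theorem error_reduction_distinguisher {n : ℕ}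
    (α ε' δ : ℝ) (hα0 : 0 ≤ α) (hα2 : α ≤ 1 / 2)
    (hε' : 0 < ε') (hδ : 0 < δ)
    (f : (Fin n → Bool) → Bool)
    (hf : δ * Ex (coin n α) f - ε' ≥ Ex (uni n) f) :
    ε' / δ ≤ Ex (coin n α) f ∧
    Nat.ceil (1 / Ex (coin n α) f) ≤ Nat.ceil (δ / ε') ∧
    (∑ x : Fin (Nat.ceil (1 / Ex (coin n α) f)) → Fin n → Bool,
        (∏ i, coin n α (x i)) * (if ∀ i, f (x i) = false then (1 : ℝ) else 0)) ≤
      Real.exp (-1) ∧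
    (∑ x : Fin (Nat.ceil (1 / Ex (coin n α) f)) → Fin n → Bool,
        (∏ i, uni n (x i)) * (if ∃ i, f (x i) = true then (1 : ℝ) else 0)) ≤ 2 * δ ∧
    (δ < 1 / 4 →
      |(∑ x : Fin (Nat.ceil (1 / Ex (coin n α) f)) → Fin n → Bool,
          (∏ i, coin n α (x i)) * (if ∃ i, f (x i) = true then (1 : ℝ) else 0)) -
        (∑ x : Fin (Nat.ceil (1 / Ex (coin n α) f)) → Fin n → Bool,
          (∏ i, uni n (x i)) * (if ∃ i, f (x i) = true then (1 : ℝ) else 0))| ≥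
        1 - Real.exp (-1) - 2 * δ) := by
  classical
  set q := Ex (coin n α) f with hqdef
  set p := Ex (uni n) f with hpdef
  -- basic facts about the distributions
  have hcoin_nonneg : ∀ z, 0 ≤ coin n α z := by
    intro z
    refine Finset.prod_nonneg fun i _ => ?_
    by_cases h : z i <;> simp [h] <;> linarith
  have hcoin_sum : ∑ z : Fin n → Bool, coin n α z = 1 := by
    unfold coin
    rw [sum_prod_fn fun (_ : Fin n) (b : Bool) => if b then (1/2 - α : ℝ) else (1/2 + α)]
    have h1 : ∀ i : Fin n, (∑ j : Bool, if j then (1/2 - α : ℝ) else (1/2 + α)) = 1 := by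
      intro i; rw [Fintype.sum_bool]; norm_num
    rw [Finset.prod_congr rfl fun i _ => h1 i]; simp
  have huni_nonneg : ∀ z : Fin n → Bool, 0 ≤ uni n z := by
    intro z; unfold uni; positivity
  have huni_sum : ∑ z : Fin n → Bool, uni n z = 1 := by
    unfold uni
    rw [Finset.sum_const, Finset.card_univ]
    simp [Fintype.card_fun]
  have hbval01 : ∀ b, 0 ≤ bval b ∧ bval b ≤ 1 := by
    intro b; unfold bval; by_cases h : b <;> simp [h]
  -- bounds on q and p
  have hq1 : q ≤ 1 := by
    rw [hqdef]
    calc Ex (coin n α) f ≤ ∑ z : Fin n → Bool, coin n α z := by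
          refine Finset.sum_le_sum fun z _ => ?_
          have := (hbval01 (f z)).2
          nlinarith [hcoin_nonneg z]
      _ = 1 := hcoin_sum
  have hp0 : 0 ≤ p := by
    rw [hpdef]
    refine Finset.sum_nonneg fun z _ => mul_nonneg (huni_nonneg z) (hbval01 (f z)).1
  have hq0 : 0 ≤ q := by
    rw [hqdef]
    refine Finset.sum_nonneg fun z _ => mul_nonneg (hcoin_nonneg z) (hbval01 (f z)).1
  have hεδq : ε' ≤ δ * q := by linarith [hf]
  have hqdiv : ε' / δ ≤ q := by rw [div_le_iff₀ hδ]; linarith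
  have hqpos : 0 < q := lt_of_lt_of_le (div_pos hε' hδ) hqdiv
  have hpδq : p ≤ δ * q := by linarith [hf]
  -- the number of copies
  set ℓ := Nat.ceil (1 / q) with hℓdef
  have hℓge : (1:ℝ) / q ≤ (ℓ : ℝ) := Nat.le_ceil _
  have hqℓ : 1 ≤ q * (ℓ : ℝ) := by
    have := mul_le_mul_of_nonneg_left hℓge (le_of_lt hqpos)
    rw [mul_one_div, div_self (ne_of_gt hqpos)] at this
    linarith
  have hℓle : (ℓ : ℝ) ≤ 2 / q := by
    have h1 : (ℓ : ℝ) < 1 / q + 1 := Nat.ceil_lt_add_one (by positivity)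
    have h2 : (1:ℝ) ≤ 1 / q := one_le_one_div hqpos hq1
    have h3 : (1:ℝ) / q + 1 ≤ 2 / q := by
      rw [div_add' _ _ _ (ne_of_gt hqpos), div_le_div_iff₀ hqpos hqpos]
      nlinarith
    linarith
  -- claim 2
  have claim2 : ℓ ≤ Nat.ceil (δ / ε') := by
    refine Nat.ceil_le_ceil ?_
    rw [div_le_div_iff₀ hqpos hε']
    linarith
  -- residual sums
  have hcoinres : (∑ z : Fin n → Bool, coin n α z * (if f z = false then (1:ℝ) else 0)) = 1 - q := by
    have hterm : ∀ z, coin n α z * (if f z = false then (1:ℝ) else 0)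
        = coin n α z - coin n α z * bval (f z) := by
      intro z; unfold bval; by_cases h : f z <;> simp [h]
    rw [Finset.sum_congr rfl fun z _ => hterm z, Finset.sum_sub_distrib, hcoin_sum, hqdef]
    rfl
  have hunires : (∑ z : Fin n → Bool, uni n z * (if f z = false then (1:ℝ) else 0)) = 1 - p := by
    have hterm : ∀ z, uni n z * (if f z = false then (1:ℝ) else 0)
        = uni n z - uni n z * bval (f z) := by
      intro z; unfold bval; by_cases h : f z <;> simp [h]
    rw [Finset.sum_congr rfl fun z _ => hterm z, Finset.sum_sub_distrib, huni_sum, hpdef]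
    rfl
  -- claim 3
  have hpow_coin : (1 - q) ^ ℓ ≤ Real.exp (-1) := by
    have h1 : (1 - q) ^ ℓ ≤ Real.exp (-q) ^ ℓ := by
      refine pow_le_pow_left₀ (by linarith) ?_ ℓ
      linarith [Real.add_one_le_exp (-q)]
    have h2 : Real.exp (-q) ^ ℓ = Real.exp ((ℓ : ℝ) * (-q)) := by
      rw [← Real.exp_nat_mul]
    have h3 : (ℓ : ℝ) * (-q) ≤ -1 := by nlinarith
    calc (1 - q) ^ ℓ ≤ Real.exp ((ℓ : ℝ) * (-q)) := by rw [← h2]; exact h1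
      _ ≤ Real.exp (-1) := Real.exp_le_exp.mpr h3
  have claim3 : (∑ x : Fin ℓ → Fin n → Bool,
      (∏ i, coin n α (x i)) * (if ∀ i, f (x i) = false then (1 : ℝ) else 0)) ≤ Real.exp (-1) := by
    rw [forall_sum, hcoinres]; exact hpow_coin
  -- claim 4
  have hp1 : p ≤ 1 := by
    rw [hpdef]
    calc Ex (uni n) f ≤ ∑ z : Fin n → Bool, uni n z := by
          refine Finset.sum_le_sum fun z _ => ?_
          have := (hbval01 (f z)).2
          nlinarith [huni_nonneg z]
      _ = 1 := huni_sum
  have huni_exists : (∑ x : Fin ℓ → Fin n → Bool,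
      (∏ i, uni n (x i)) * (if ∃ i, f (x i) = true then (1 : ℝ) else 0)) = 1 - (1 - p) ^ ℓ := by
    rw [exists_sum, hunires, huni_sum, one_pow]
  have claim4 : (∑ x : Fin ℓ → Fin n → Bool,
      (∏ i, uni n (x i)) * (if ∃ i, f (x i) = true then (1 : ℝ) else 0)) ≤ 2 * δ := by
    rw [huni_exists]
    have hbern : 1 - (ℓ : ℝ) * p ≤ (1 - p) ^ ℓ := by
      have := one_add_mul_le_pow (a := -p) (by linarith) ℓ
      rw [← sub_eq_add_neg] at this; linarith
    have hℓp : (ℓ : ℝ) * p ≤ 2 * δ := by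
      calc (ℓ : ℝ) * p ≤ (2 / q) * (δ * q) := by
            refine mul_le_mul hℓle hpδq hp0 (by positivity)
        _ = 2 * δ := by field_simp
    linarith
  -- claim 5
  refine ⟨hqdiv, claim2, claim3, claim4, fun hδ4 => ?_⟩
  have hcoin_exists : (∑ x : Fin ℓ → Fin n → Bool,
      (∏ i, coin n α (x i)) * (if ∃ i, f (x i) = true then (1 : ℝ) else 0)) = 1 - (1 - q) ^ ℓ := by
    rw [exists_sum, hcoinres, hcoin_sum, one_pow]
  have hBnonneg : 0 ≤ (∑ x : Fin ℓ → Fin n → Bool,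
      (∏ i, uni n (x i)) * (if ∃ i, f (x i) = true then (1 : ℝ) else 0)) := by
    refine Finset.sum_nonneg fun x _ => mul_nonneg ?_ ?_
    · exact Finset.prod_nonneg fun i _ => huni_nonneg (x i)
    · split <;> norm_num
  have hA : 1 - Real.exp (-1) ≤ (∑ x : Fin ℓ → Fin n → Bool,
      (∏ i, coin n α (x i)) * (if ∃ i, f (x i) = true then (1 : ℝ) else 0)) := by
    rw [hcoin_exists]; linarith
  have := le_abs_self ((∑ x : Fin ℓ → Fin n → Bool,
      (∏ i, coin n α (x i)) * (if ∃ i, f (x i) = true then (1 : ℝ) else 0)) -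
    (∑ x : Fin ℓ → Fin n → Bool,
      (∏ i, uni n (x i)) * (if ∃ i, f (x i) = true then (1 : ℝ) else 0)))
  linarith
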